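/- Let X ⊆ ℝ⁴ be a symplectic polytope. Then for every y ∈ frontier X, the Reeb cone at y has dimension at most 1: any two vectors w₁, w₂ with wⱼ ∈ T_y⁺X and −i·wⱼ ∈ N_y⁺X (j = 1, 2) are linearly dependent. (Lemma 3.8 of the paper.) -/

import Mathlib

open RealInnerProductSpace

/-- The standard complex structure on ℝ⁴:
`i(x₁,x₂,y₁,y₂) = (−y₁,−y₂,x₁,x₂)`. -/
def Imap (v : EuclideanSpace ℝ (Fin 4)) : EuclideanSpace ℝ (Fin 4) :=
  WithLp.toLp 2 ![-(v 2), -(v 3), v 0, v 1]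

/-- The standard symplectic form on ℝ⁴: `ω₀(u,v) = ⟪i·u, v⟫`. -/
noncomputable def omega0 (u v : EuclideanSpace ℝ (Fin 4)) : ℝ := ⟪Imap u, v⟫

/-- The tangent cone `T_y⁺X`. -/
def tangentConePlus {m : ℕ} (X : Set (EuclideanSpace ℝ (Fin m)))
    (y : EuclideanSpace ℝ (Fin m)) : Set (EuclideanSpace ℝ (Fin m)) :=
  closure {v | ∃ ε : ℝ, 0 < ε ∧ y + ε • v ∈ X}

/-- The positive normal cone `N_y⁺X`. -/
def normalConePlus {m : ℕ} (X : Set (EuclideanSpace ℝ (Fin m)))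
    (y : EuclideanSpace ℝ (Fin m)) : Set (EuclideanSpace ℝ (Fin m)) :=
  {v | ∀ x ∈ X, ⟪x - y, v⟫ ≤ 0}

lemma inner_Imap (u v : EuclideanSpace ℝ (Fin 4)) :
    ⟪Imap u, v⟫ = -(u 2)*(v 0) - u 3 * v 1 + u 0 * v 2 + u 1 * v 3 := by
  simp [Imap, PiLp.inner_apply, RCLike.inner_apply, Fin.sum_univ_four]
  ring

lemma inner_Imap_skew (u v : EuclideanSpace ℝ (Fin 4)) :
    ⟪Imap u, v⟫ = -⟪u, Imap v⟫ := by
  rw [inner_Imap, real_inner_comm, inner_Imap]; ring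

lemma inner_Imap_self (u : EuclideanSpace ℝ (Fin 4)) : ⟪Imap u, u⟫ = 0 := by
  rw [inner_Imap]; ring

lemma Imap_comb (a b : ℝ) (u v : EuclideanSpace ℝ (Fin 4)) :
    Imap (a • u + b • v) = a • Imap u + b • Imap v := by
  ext i; fin_cases i <;> simp [Imap] <;> ring

lemma Imap_Imap (v : EuclideanSpace ℝ (Fin 4)) : Imap (Imap v) = -v := by
  ext i; fin_cases i <;> simp [Imap]

/-- tangent/normal cone pairing. -/
lemma tn_pair {m : ℕ} {X : Set (EuclideanSpace ℝ (Fin m))} {z v u : EuclideanSpace ℝ (Fin m)}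
    (hv : v ∈ tangentConePlus X z) (hu : u ∈ normalConePlus X z) : ⟪v, u⟫ ≤ 0 := by
  have hcl : IsClosed {w : EuclideanSpace ℝ (Fin m) | ⟪w, u⟫ ≤ 0} :=
    isClosed_le (Continuous.inner continuous_id continuous_const) continuous_const
  refine closure_minimal ?_ hcl hv
  rintro w ⟨ε, hε, hw⟩
  have h := hu _ hw
  rw [add_sub_cancel_left, real_inner_smul_left] at h
  simp only [Set.mem_setOf_eq, not_le] at *
  by_contra hc
  push_neg at hc
  nlinarith

section Poly
variable {N : ℕ} {n : Fin N → EuclideanSpace ℝ (Fin 4)} {c : Fin N → ℝ}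
  {X : Set (EuclideanSpace ℝ (Fin 4))}

lemma tangent_active_nonpos (hX : X = ⋂ i, {x | ⟪x, n i⟫ ≤ c i})
    {y v : EuclideanSpace ℝ (Fin 4)} (hv : v ∈ tangentConePlus X y)
    {i : Fin N} (hi : ⟪y, n i⟫ = c i) : ⟪v, n i⟫ ≤ 0 := by
  have hcl : IsClosed {w : EuclideanSpace ℝ (Fin 4) | ⟪w, n i⟫ ≤ 0} :=
    isClosed_le (Continuous.inner continuous_id continuous_const) continuous_const
  refine closure_minimal ?_ hcl hv
  rintro w ⟨ε, hε, hw⟩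
  rw [hX, Set.mem_iInter] at hw
  have h := hw i
  simp only [Set.mem_setOf_eq, inner_add_left, real_inner_smul_left, hi] at h
  simp only [Set.mem_setOf_eq, not_le] at *
  by_contra hc
  push_neg at hc
  nlinarith

lemma exists_eps (hX : X = ⋂ i, {x | ⟪x, n i⟫ ≤ c i})
    {z s : EuclideanSpace ℝ (Fin 4)} (hz : z ∈ X)
    (hs : ∀ i, ⟪z, n i⟫ = c i → ⟪s, n i⟫ ≤ 0) :
    ∃ ε : ℝ, 0 < ε ∧ z + ε • s ∈ X ∧
      ∀ i, ⟪z, n i⟫ < c i → ⟪z + ε • s, n i⟫ < c i := by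
  have key : ∀ (ε : ℝ) i, ⟪z + ε • s, n i⟫ = ⟪z, n i⟫ + ε * ⟪s, n i⟫ := by
    intro ε i; rw [inner_add_left, real_inner_smul_left]
  have hev : ∀ᶠ ε in nhdsWithin (0:ℝ) (Set.Ioi 0),
      ∀ i, ⟪z, n i⟫ < c i → ⟪z + ε • s, n i⟫ < c i := by
    rw [Filter.eventually_all]
    intro i
    by_cases hi : ⟪z, n i⟫ < c i
    · have hten : Filter.Tendsto (fun ε : ℝ => ⟪z, n i⟫ + ε * ⟪s, n i⟫)
          (nhdsWithin (0:ℝ) (Set.Ioi 0)) (nhds (⟪z, n i⟫)) := by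
        have : Continuous (fun ε : ℝ => ⟪z, n i⟫ + ε * ⟪s, n i⟫) := by continuity
        have h0 := (this.tendsto 0).mono_left
          (nhdsWithin_le_nhds : nhdsWithin (0:ℝ) (Set.Ioi 0) ≤ nhds 0)
        simpa using h0
      filter_upwards [hten.eventually_lt_const hi] with ε hε _
      rw [key]; exact hε
    · filter_upwards with ε h; exact absurd h hi
  have hpos : ∀ᶠ ε in nhdsWithin (0:ℝ) (Set.Ioi 0), (0:ℝ) < ε :=
    eventually_mem_nhdsWithin
  obtain ⟨ε, hε1, hε0⟩ := (hev.and hpos).exists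
  refine ⟨ε, hε0, ?_, hε1⟩
  rw [hX, Set.mem_iInter]
  intro i
  have hzi : ⟪z, n i⟫ ≤ c i := by
    rw [hX, Set.mem_iInter] at hz; exact hz i
  rcases eq_or_lt_of_le hzi with h | h
  · show ⟪z + ε • s, n i⟫ ≤ c i
    rw [key]
    have := hs i h
    nlinarith
  · exact le_of_lt (hε1 i h)

lemma mem_tangent_of (hX : X = ⋂ i, {x | ⟪x, n i⟫ ≤ c i})
    {z v : EuclideanSpace ℝ (Fin 4)} (hz : z ∈ X)
    (hv : ∀ i, ⟪z, n i⟫ = c i → ⟪v, n i⟫ ≤ 0) : v ∈ tangentConePlus X z := by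
  obtain ⟨ε, hε, hmem, -⟩ := exists_eps hX hz hv
  exact subset_closure ⟨ε, hε, hmem⟩

end Poly

/-- Lemma 3.8: if `X ⊆ ℝ⁴` is a symplectic polytope (a convex polytope with `0` in its
interior, none of whose 2-faces is Lagrangian; the latter is expressed by requiring
that for every boundary point `y` whose face direction space
`L_y = T_y⁺X ∩ (−T_y⁺X)` is a 2-dimensional subspace, `ω₀` does not vanish
identically on `L_y`), then for every `y ∈ frontier X`, any two vectors of the Reeb
cone `R_y⁺X = {w : w ∈ T_y⁺X, −i·w ∈ N_y⁺X}` are linearly dependent. -/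
theorem reebCone_dim_le_one {N : ℕ}
    (n : Fin N → EuclideanSpace ℝ (Fin 4)) (c : Fin N → ℝ)
    (hn : ∀ i, n i ≠ 0)
    (X : Set (EuclideanSpace ℝ (Fin 4)))
    (hX : X = ⋂ i, {x | ⟪x, n i⟫ ≤ c i})
    (hcomp : IsCompact X)
    (h0 : (0 : EuclideanSpace ℝ (Fin 4)) ∈ interior X)
    (hsymp : ∀ y ∈ frontier X, ∀ L : Submodule ℝ (EuclideanSpace ℝ (Fin 4)),
      (L : Set (EuclideanSpace ℝ (Fin 4))) =
        tangentConePlus X y ∩ -(tangentConePlus X y) →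
      Module.finrank ℝ L = 2 →
      ∃ u ∈ L, ∃ v ∈ L, omega0 u v ≠ 0) :
    ∀ y ∈ frontier X, ∀ w₁ w₂ : EuclideanSpace ℝ (Fin 4),
      w₁ ∈ tangentConePlus X y → -(Imap w₁) ∈ normalConePlus X y →
      w₂ ∈ tangentConePlus X y → -(Imap w₂) ∈ normalConePlus X y →
      ∃ a b : ℝ, (a ≠ 0 ∨ b ≠ 0) ∧ a • w₁ + b • w₂ = 0 := by
  intro y hyF w₁ w₂ hT1 hN1 hT2 hN2
  by_contra hcon
  push_neg at hcon
  -- linear independence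
  have hind : ∀ a b : ℝ, a • w₁ + b • w₂ = 0 → a = 0 ∧ b = 0 := by
    intro a b hab
    constructor
    · by_contra ha; exact hcon a b (Or.inl ha) hab
    · by_contra hb; exact hcon a b (Or.inr hb) hab
  have hli : LinearIndependent ℝ ![w₁, w₂] := LinearIndependent.pair_iff.mpr hind
  have hw1 : w₁ ≠ 0 := by
    intro h; exact hcon 1 0 (Or.inl one_ne_zero) (by simp [h])
  -- X is closed, y ∈ X
  have hXc : IsClosed X := by
    rw [hX]
    exact isClosed_iInter fun i =>
      isClosed_le (Continuous.inner continuous_id continuous_const) continuous_const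
  have hyX : y ∈ X := hXc.frontier_subset hyF
  -- the four symplectic orthogonality relations
  have h11 : ⟪w₁, Imap w₁⟫ = 0 := by
    rw [real_inner_comm]; exact inner_Imap_self w₁
  have h22 : ⟪w₂, Imap w₂⟫ = 0 := by
    rw [real_inner_comm]; exact inner_Imap_self w₂
  have h21' : ⟪w₂, -(Imap w₁)⟫ ≤ 0 := tn_pair hT2 hN1
  have h12' : ⟪w₁, -(Imap w₂)⟫ ≤ 0 := tn_pair hT1 hN2
  rw [inner_neg_right] at h21' h12'
  have hskew : ⟪w₂, Imap w₁⟫ = -⟪w₁, Imap w₂⟫ := by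
    rw [real_inner_comm (Imap w₁) w₂, real_inner_comm (Imap w₂) w₁, inner_Imap, inner_Imap]
    ring
  have h21 : ⟪w₂, Imap w₁⟫ = 0 := by linarith
  have h12 : ⟪w₁, Imap w₂⟫ = 0 := by linarith
  -- active constraints at y
  have hw1A : ∀ i, ⟪y, n i⟫ = c i → ⟪w₁, n i⟫ ≤ 0 := fun i hi =>
    tangent_active_nonpos hX hT1 hi
  have hw2A : ∀ i, ⟪y, n i⟫ = c i → ⟪w₂, n i⟫ ≤ 0 := fun i hi =>
    tangent_active_nonpos hX hT2 hi
  -- choose ε and set y'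
  obtain ⟨ε, hε, hy'X, hstrict⟩ := exists_eps hX hyX (s := w₁ + w₂)
    (fun i hi => by rw [inner_add_left]; linarith [hw1A i hi, hw2A i hi])
  set y' : EuclideanSpace ℝ (Fin 4) := y + ε • (w₁ + w₂) with hy'def
  -- normals transported to y'
  have hsn1 : ⟪w₁ + w₂, -(Imap w₁)⟫ = 0 := by
    rw [inner_neg_right, inner_add_left]; linarith
  have hsn2 : ⟪w₁ + w₂, -(Imap w₂)⟫ = 0 := by
    rw [inner_neg_right, inner_add_left]; linarith
  have hdiff : ∀ (x u : EuclideanSpace ℝ (Fin 4)),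
      ⟪x - y', u⟫ = ⟪x - y, u⟫ - ε * ⟪w₁ + w₂, u⟫ := by
    intro x u
    have : x - y' = (x - y) - ε • (w₁ + w₂) := by rw [hy'def]; abel
    rw [this, inner_sub_left, real_inner_smul_left]
  have hN1' : -(Imap w₁) ∈ normalConePlus X y' := by
    intro x hx
    rw [hdiff, hsn1]
    simpa using hN1 x hx
  have hN2' : -(Imap w₂) ∈ normalConePlus X y' := by
    intro x hx
    rw [hdiff, hsn2]
    simpa using hN2 x hx
  -- y' ∈ frontier X
  have hIw1 : Imap w₁ ≠ 0 := by
    intro h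
    have := Imap_Imap w₁
    rw [h] at this
    simp only [Imap] at this
    apply hw1
    have : -w₁ = 0 := by rw [← this]; ext i; fin_cases i <;> simp
    simpa using this
  have hy'F : y' ∈ frontier X := by
    rw [frontier, hXc.closure_eq]
    refine ⟨hy'X, fun hint => ?_⟩
    obtain ⟨r, hr, hball⟩ := Metric.isOpen_iff.mp isOpen_interior y' hint
    set u : EuclideanSpace ℝ (Fin 4) := -(Imap w₁) with hu
    have hun : u ≠ 0 := by simpa [hu] using hIw1
    have hunorm : (0:ℝ) < ‖u‖ := norm_pos_iff.mpr hun
    set t : ℝ := r / (2 * ‖u‖) with ht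
    have htpos : 0 < t := by positivity
    have hxball : y' + t • u ∈ Metric.ball y' r := by
      rw [Metric.mem_ball, dist_eq_norm]
      have : y' + t • u - y' = t • u := by abel
      rw [this, norm_smul, Real.norm_eq_abs, abs_of_pos htpos, ht]
      rw [div_mul_eq_mul_div, mul_comm]
      rw [div_lt_iff₀ (by positivity)]
      nlinarith
    have hxX : y' + t • u ∈ X := interior_subset (hball hxball)
    have := hN1' _ hxX
    rw [add_sub_cancel_left, real_inner_smul_left, real_inner_self_eq_norm_sq] at this
    nlinarith [mul_pos htpos (pow_pos hunorm 2)]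
  -- characterization of active constraints at y'
  have hA' : ∀ i, ⟪y', n i⟫ = c i → ⟪w₁, n i⟫ = 0 ∧ ⟪w₂, n i⟫ = 0 := by
    intro i hi
    have hyle : ⟪y, n i⟫ ≤ c i := by
      rw [hX, Set.mem_iInter] at hyX; exact hyX i
    rcases eq_or_lt_of_le hyle with h | h
    · have h1 := hw1A i h
      have h2 := hw2A i h
      have : ⟪y', n i⟫ = ⟪y, n i⟫ + ε * (⟪w₁, n i⟫ + ⟪w₂, n i⟫) := by
        rw [hy'def, inner_add_left, real_inner_smul_left, inner_add_left]
      rw [this, h] at hi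
      constructor <;> nlinarith
    · exact absurd hi (ne_of_lt (hstrict i h))
  have c1 : ⟪Imap w₁, w₁⟫ = 0 := inner_Imap_self w₁
  have c2 : ⟪Imap w₁, w₂⟫ = 0 := by rw [real_inner_comm]; exact h21
  have c3 : ⟪Imap w₂, w₁⟫ = 0 := by rw [real_inner_comm]; exact h12
  have c4 : ⟪Imap w₂, w₂⟫ = 0 := inner_Imap_self w₂
  -- the plane P
  set P : Submodule ℝ (EuclideanSpace ℝ (Fin 4)) := Submodule.span ℝ {w₁, w₂} with hP
  -- P ⊆ T ∩ -T at y'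
  have hPsub : (P : Set (EuclideanSpace ℝ (Fin 4))) ⊆
      tangentConePlus X y' ∩ -(tangentConePlus X y') := by
    intro v hv
    rw [SetLike.mem_coe, Submodule.mem_span_pair] at hv
    obtain ⟨a, b, rfl⟩ := hv
    have hz : ∀ i, ⟪y', n i⟫ = c i → ⟪a • w₁ + b • w₂, n i⟫ = 0 := by
      intro i hi
      obtain ⟨h1, h2⟩ := hA' i hi
      rw [inner_add_left, real_inner_smul_left, real_inner_smul_left, h1, h2]
      ring
    constructor
    · exact mem_tangent_of hX hy'X (fun i hi => le_of_eq (hz i hi))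
    · rw [Set.mem_neg]
      rw [show -(a • w₁ + b • w₂) = (-a) • w₁ + (-b) • w₂ from by module]
      refine mem_tangent_of hX hy'X (fun i hi => ?_)
      obtain ⟨h1, h2⟩ := hA' i hi
      rw [inner_add_left, real_inner_smul_left, real_inner_smul_left, h1, h2]
      simp
  -- independence of the normals
  have hlin : LinearIndependent ℝ ![(-(Imap w₁) : EuclideanSpace ℝ (Fin 4)), -(Imap w₂)] := by
    rw [LinearIndependent.pair_iff]
    intro s t hst
    have hst' : s • Imap w₁ + t • Imap w₂ = 0 := by
      have e : s • Imap w₁ + t • Imap w₂ =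
          -(s • -(Imap w₁) + t • -(Imap w₂)) := by module
      rw [e, hst]; simp
    have hI0 : Imap (s • w₁ + t • w₂) = 0 := by rw [Imap_comb, hst']
    have hImap0 : Imap (0 : EuclideanSpace ℝ (Fin 4)) = 0 := by
      ext i; fin_cases i <;> simp [Imap]
    have h2 : -(s • w₁ + t • w₂) = 0 := by
      rw [← Imap_Imap (s • w₁ + t • w₂), hI0, hImap0]
    exact hind s t (neg_eq_zero.mp h2)
  -- M = orthogonal complement of span of normals
  set M : Submodule ℝ (EuclideanSpace ℝ (Fin 4)) :=
    (Submodule.span ℝ {(-(Imap w₁) : EuclideanSpace ℝ (Fin 4)), -(Imap w₂)})ᗮ with hM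
  have hrange2 : (Set.range ![(-(Imap w₁) : EuclideanSpace ℝ (Fin 4)), -(Imap w₂)]) =
      {(-(Imap w₁) : EuclideanSpace ℝ (Fin 4)), -(Imap w₂)} := by
    simp [Matrix.range_cons, Matrix.range_empty]
    exact Set.pair_comm _ _
  have hrankn : Module.finrank ℝ
      (Submodule.span ℝ {(-(Imap w₁) : EuclideanSpace ℝ (Fin 4)), -(Imap w₂)}) = 2 := by
    have := finrank_span_eq_card hlin
    rw [hrange2] at this
    simpa using this
  have hrankM : Module.finrank ℝ M = 2 := by
    have := Submodule.finrank_add_finrank_orthogonal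
      (K := Submodule.span ℝ {(-(Imap w₁) : EuclideanSpace ℝ (Fin 4)), -(Imap w₂)})
    rw [hrankn, finrank_euclideanSpace_fin, ← hM] at this
    omega
  have hrangew : (Set.range ![w₁, w₂]) = {w₁, w₂} := by
    simp [Matrix.range_cons, Matrix.range_empty]
    exact Set.pair_comm _ _
  have hrankP : Module.finrank ℝ P = 2 := by
    have := finrank_span_eq_card hli
    rw [hrangew] at this
    simpa [hP] using this
  -- P ≤ M
  have hPM : P ≤ M := by
    rw [hP, Submodule.span_le]
    rintro v (rfl | rfl) <;>
    · rw [SetLike.mem_coe, hM, Submodule.mem_orthogonal]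
      intro u hu
      rw [Submodule.mem_span_pair] at hu
      obtain ⟨a, b, rfl⟩ := hu
      simp only [inner_add_left, real_inner_smul_left, inner_neg_left, c1, c2, c3, c4]
      ring
  have hPeqM : P = M := Submodule.eq_of_le_of_finrank_eq hPM (by rw [hrankP, hrankM])
  -- T ∩ -T ⊆ P
  have hTsub : tangentConePlus X y' ∩ -(tangentConePlus X y') ⊆
      (P : Set (EuclideanSpace ℝ (Fin 4))) := by
    rintro v ⟨hv1, hv2⟩
    rw [Set.mem_neg] at hv2
    have e1 : ⟪v, -(Imap w₁)⟫ ≤ 0 := tn_pair hv1 hN1'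
    have e1' : ⟪-v, -(Imap w₁)⟫ ≤ 0 := tn_pair hv2 hN1'
    have e2 : ⟪v, -(Imap w₂)⟫ ≤ 0 := tn_pair hv1 hN2'
    have e2' : ⟪-v, -(Imap w₂)⟫ ≤ 0 := tn_pair hv2 hN2'
    rw [inner_neg_left] at e1' e2'
    have f1 : ⟪v, -(Imap w₁)⟫ = 0 := le_antisymm e1 (by linarith)
    have f2 : ⟪v, -(Imap w₂)⟫ = 0 := le_antisymm e2 (by linarith)
    have g1 : ⟪Imap w₁, v⟫ = 0 := by
      rw [real_inner_comm]
      rw [inner_neg_right, neg_eq_zero] at f1; exact f1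
    have g2 : ⟪Imap w₂, v⟫ = 0 := by
      rw [real_inner_comm]
      rw [inner_neg_right, neg_eq_zero] at f2; exact f2
    rw [hPeqM, hM, SetLike.mem_coe, Submodule.mem_orthogonal]
    intro u hu
    rw [Submodule.mem_span_pair] at hu
    obtain ⟨a, b, rfl⟩ := hu
    simp only [inner_add_left, real_inner_smul_left, inner_neg_left, g1, g2]
    ring
  have hPset : (P : Set (EuclideanSpace ℝ (Fin 4))) =
      tangentConePlus X y' ∩ -(tangentConePlus X y') :=
    Set.Subset.antisymm hPsub hTsub
  -- apply the symplectic hypothesis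
  obtain ⟨u, hu, v, hv, hne⟩ := hsymp y' hy'F P hPset hrankP
  apply hne
  rw [Submodule.mem_span_pair] at hu hv
  obtain ⟨a, b, rfl⟩ := hu
  obtain ⟨a', b', rfl⟩ := hv
  show ⟪Imap (a • w₁ + b • w₂), a' • w₁ + b' • w₂⟫ = 0
  rw [Imap_comb]
  simp only [inner_add_left, inner_add_right, real_inner_smul_left,
    real_inner_smul_right, c1, c2, c3, c4]
  ring
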